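/- Let x_r < ... < x_{r+p+1} be distinct points, V : ℝ → ℝ, F_0 the interpolant of V at x_r,...,x_{r+p}, F_1 the interpolant at x_{r+1},...,x_{r+p+1}, and f_i = F_i'. Then for any point x* ∈ {x_{r+1}, ..., x_{r+p}} (a point common to both stencils), f_1(x*) − f_0(x*) = V[x_r,...,x_{r+p+1}] · (x_{r+p+1} − x_r) · Π_{m : x_{r+m} ≠ x*, 1 ≤ m ≤ p} (x* − x_{r+m}). -/

import Mathlib

open Polynomial Finset

noncomputable def dd (x V : ℤ → ℝ) : ℕ → ℤ → ℝ
  | 0, i => V i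
  | j + 1, i => (dd x V j (i + 1) - dd x V j i) / (x (i + (j : ℤ) + 1) - x i)

lemma degree_le_of_lt_succ {F : Polynomial ℝ} {p : ℕ} (h : F.degree < (p + 1 : ℕ)) :
    F.degree ≤ p := by
  rw [Polynomial.degree_lt_iff_coeff_zero] at h
  rw [Polynomial.degree_le_iff_coeff_zero]
  intro m hm
  exact h m (by exact_mod_cast hm)

lemma coeff_linear_mul {Q : Polynomial ℝ} {p : ℕ} (a : ℝ) (hQ : Q.degree ≤ p) :
    ((X - C a) * Q).coeff (p + 1) = Q.coeff p := by
  have h0 : Q.coeff (p + 1) = 0 :=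
    Polynomial.coeff_eq_zero_of_degree_lt (lt_of_le_of_lt hQ (by exact_mod_cast Nat.lt_succ_self p))
  rw [sub_mul, Polynomial.coeff_sub, Polynomial.coeff_X_mul, Polynomial.coeff_C_mul, h0]
  ring

lemma coeff_eq_dd (x : ℤ → ℝ) (hx : StrictMono x) (v : ℤ → ℝ) :
    ∀ (p : ℕ) (r : ℤ) (F : Polynomial ℝ), F.degree ≤ p →
      (∀ i ∈ Finset.Icc r (r + p), F.eval (x i) = v i) → F.coeff p = dd x v p r := by
  intro p
  induction p with
  | zero =>
    intro r F hdeg heval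
    have hF : F = C (F.coeff 0) := Polynomial.eq_C_of_degree_le_zero (by simpa using hdeg)
    have := heval r (by simp)
    rw [hF] at this
    simpa [dd] using this
  | succ p IH =>
    intro r F hdeg heval
    have heval' : ∀ i ∈ Finset.Icc r (r + p + 1), F.eval (x i) = v i := by
      intro i hi
      apply heval i
      rw [Finset.mem_Icc] at hi ⊢
      push_cast
      omega
    set s0 : Finset ℤ := Finset.Icc r (r + p) with hs0
    set s1 : Finset ℤ := Finset.Icc (r + 1) (r + p + 1) with hs1
    set s : Finset ℤ := Finset.Icc r (r + p + 1) with hs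
    have hinj : ∀ t : Finset ℤ, Set.InjOn x t := fun t a _ b _ h => hx.injective h
    have hcard0 : s0.card = p + 1 := by rw [hs0, Int.card_Icc]; omega
    have hcard1 : s1.card = p + 1 := by rw [hs1, Int.card_Icc]; omega
    have hcard : s.card = p + 2 := by rw [hs, Int.card_Icc]; omega
    set A : Polynomial ℝ := Lagrange.interpolate s0 x (fun i => v i) with hA
    set B : Polynomial ℝ := Lagrange.interpolate s1 x (fun i => v i) with hB
    have hAdeg : A.degree ≤ p := by
      apply degree_le_of_lt_succ
      rw [← hcard0]
      exact Lagrange.degree_interpolate_lt _ (hinj s0)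
    have hBdeg : B.degree ≤ p := by
      apply degree_le_of_lt_succ
      rw [← hcard1]
      exact Lagrange.degree_interpolate_lt _ (hinj s1)
    have hAeval : ∀ i ∈ s0, A.eval (x i) = v i := fun i hi =>
      Lagrange.eval_interpolate_at_node _ (hinj s0) hi
    have hBeval : ∀ i ∈ s1, B.eval (x i) = v i := fun i hi =>
      Lagrange.eval_interpolate_at_node _ (hinj s1) hi
    have hAc : A.coeff p = dd x v p r := IH r A hAdeg hAeval
    have hBc : B.coeff p = dd x v p (r + 1) := by
      apply IH (r + 1) B hBdeg
      intro i hi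
      apply hBeval i
      rw [hs1, Finset.mem_Icc]
      rw [Finset.mem_Icc] at hi
      omega
    have hxne : x (r + p + 1) - x r ≠ 0 := by
      have : x r < x (r + p + 1) := hx (by omega)
      linarith
    have hG : C (x (r + p + 1) - x r) * F -
        ((X - C (x r)) * B - (X - C (x (r + p + 1))) * A) = 0 := by
      apply Polynomial.eq_zero_of_degree_lt_of_eval_index_eq_zero s (hinj s)
      · rw [hcard]
        have h1 : ((X - C (x r)) * B).degree ≤ ((p + 1 : ℕ) : WithBot ℕ) := by
          apply le_trans (Polynomial.degree_mul_le _ _)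
          rw [Polynomial.degree_X_sub_C]
          calc (1 : WithBot ℕ) + B.degree ≤ 1 + (p : WithBot ℕ) := by
                exact add_le_add_right hBdeg 1
            _ = ((p + 1 : ℕ) : WithBot ℕ) := by push_cast; ring
        have h2 : ((X - C (x (r + p + 1))) * A).degree ≤ ((p + 1 : ℕ) : WithBot ℕ) := by
          apply le_trans (Polynomial.degree_mul_le _ _)
          rw [Polynomial.degree_X_sub_C]
          calc (1 : WithBot ℕ) + A.degree ≤ 1 + (p : WithBot ℕ) := by
                exact add_le_add_right hAdeg 1
            _ = ((p + 1 : ℕ) : WithBot ℕ) := by push_cast; ring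
        have h3 : (C (x (r + p + 1) - x r) * F).degree ≤ ((p + 1 : ℕ) : WithBot ℕ) := by
          apply le_trans (Polynomial.degree_mul_le _ _)
          calc (C (x (r + p + 1) - x r)).degree + F.degree
              ≤ 0 + ((p + 1 : ℕ) : WithBot ℕ) := by
                exact add_le_add Polynomial.degree_C_le (by exact_mod_cast hdeg)
            _ = ((p + 1 : ℕ) : WithBot ℕ) := by rw [zero_add]
        calc (C (x (r + p + 1) - x r) * F -
              ((X - C (x r)) * B - (X - C (x (r + p + 1))) * A)).degree
            ≤ max (C (x (r + p + 1) - x r) * F).degree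
              ((X - C (x r)) * B - (X - C (x (r + p + 1))) * A).degree :=
              Polynomial.degree_sub_le _ _
          _ ≤ ((p + 1 : ℕ) : WithBot ℕ) := by
              apply max_le h3
              exact le_trans (Polynomial.degree_sub_le _ _) (max_le h1 h2)
          _ < ((p + 2 : ℕ) : WithBot ℕ) := by exact_mod_cast Nat.lt_succ_self (p + 1)
      · intro i hi
        rw [hs, Finset.mem_Icc] at hi
        have hFi : F.eval (x i) = v i := heval' i (by rw [Finset.mem_Icc]; omega)
        have hBi : (x i - x r) * B.eval (x i) = (x i - x r) * v i := by
          by_cases h : i = r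
          · subst h; ring
          · rw [hBeval i (by rw [hs1, Finset.mem_Icc]; omega)]
        have hAi : (x i - x (r + p + 1)) * A.eval (x i) = (x i - x (r + p + 1)) * v i := by
          by_cases h : i = r + p + 1
          · subst h; ring
          · rw [hAeval i (by rw [hs0, Finset.mem_Icc]; omega)]
        simp only [Polynomial.eval_sub, Polynomial.eval_mul, Polynomial.eval_C,
          Polynomial.eval_X, hFi]
        rw [sub_eq_zero]
        rw [hBi, hAi]
        ring
    rw [sub_eq_zero] at hG
    have hcoeff := congrArg (fun Q : Polynomial ℝ => Q.coeff (p + 1)) hG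
    simp only [Polynomial.coeff_sub, Polynomial.coeff_C_mul] at hcoeff
    rw [coeff_linear_mul _ hBdeg, coeff_linear_mul _ hAdeg, hAc, hBc] at hcoeff
    show F.coeff (p + 1) = (dd x v p (r + 1) - dd x v p r) / (x (r + p + 1) - x r)
    rw [eq_div_iff hxne]
    rw [mul_comm] at hcoeff
    exact hcoeff

theorem deriv_shift_difference (p : ℕ) (r : ℤ) (x : ℤ → ℝ) (hx : StrictMono x)
    (V : ℝ → ℝ) (F₀ F₁ : Polynomial ℝ)
    (hd0 : F₀.degree ≤ p) (hd1 : F₁.degree ≤ p)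
    (h0 : ∀ i ∈ Finset.Icc r (r + p), F₀.eval (x i) = V (x i))
    (h1 : ∀ i ∈ Finset.Icc (r + 1) (r + p + 1), F₁.eval (x i) = V (x i))
    (k : ℕ) (hk1 : 1 ≤ k) (hkp : k ≤ p) :
    (Polynomial.derivative F₁).eval (x (r + k)) -
      (Polynomial.derivative F₀).eval (x (r + k)) =
      dd x (fun i => V (x i)) (p + 1) r * (x (r + p + 1) - x r) *
        ∏ m ∈ (Finset.Icc 1 p).erase k, (x (r + k) - x (r + m)) := by
  classical
  set v : ℤ → ℝ := fun i => V (x i) with hv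
  have hc0 : F₀.coeff p = dd x v p r := coeff_eq_dd x hx v p r F₀ hd0 h0
  have hc1 : F₁.coeff p = dd x v p (r + 1) := by
    apply coeff_eq_dd x hx v p (r + 1) F₁ hd1
    intro i hi
    apply h1 i
    rw [Finset.mem_Icc] at hi ⊢
    omega
  have hxne : x (r + p + 1) - x r ≠ 0 := by
    have : x r < x (r + p + 1) := hx (by omega)
    linarith
  set c : ℝ := dd x v (p + 1) r * (x (r + p + 1) - x r) with hc
  have hcc : c = dd x v p (r + 1) - dd x v p r := by
    rw [hc]
    show (dd x v p (r + 1) - dd x v p r) / (x (r + p + 1) - x r) * (x (r + p + 1) - x r) = _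
    rw [div_mul_cancel₀ _ hxne]
  set P : Polynomial ℝ := ∏ m ∈ Finset.Icc 1 p, (X - C (x (r + m))) with hP
  have hmonic : P.Monic := monic_prod_of_monic _ _ fun _ _ => monic_X_sub_C _
  have hPdeg : P.natDegree = p := by
    rw [hP, Polynomial.natDegree_prod_of_monic _ _ fun _ _ => monic_X_sub_C _]
    simp [Polynomial.natDegree_X_sub_C]
  have hPp : P.coeff p = 1 := by
    rw [← hPdeg]; exact hmonic.coeff_natDegree
  have hPdeg' : P.degree ≤ (p : ℕ) := by
    rw [← hPdeg]; exact Polynomial.degree_le_natDegree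
  have hD : F₁ - F₀ = C c * P := by
    rw [← sub_eq_zero]
    apply Polynomial.eq_zero_of_degree_lt_of_eval_index_eq_zero (Finset.Icc 1 p)
      (v := fun m : ℕ => x (r + m))
    · intro a ha b hb h
      have := hx.injective h
      omega
    · rw [Nat.card_Icc]
      rw [Polynomial.degree_lt_iff_coeff_zero]
      intro m hm
      have hm' : (p : ℕ) ≤ m := by omega
      simp only [Polynomial.coeff_sub, Polynomial.coeff_C_mul]
      rcases eq_or_lt_of_le hm' with h | h
      · subst h
        rw [hc1, hc0, hPp, hcc]; ring
      · have hz : ∀ Q : Polynomial ℝ, Q.degree ≤ (p : ℕ) → Q.coeff m = 0 := fun Q hQ =>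
          Polynomial.coeff_eq_zero_of_degree_lt (lt_of_le_of_lt hQ (by exact_mod_cast h))
        rw [hz F₁ hd1, hz F₀ hd0, hz P hPdeg']
        ring
    · intro m hm
      rw [Finset.mem_Icc] at hm
      have h1m : F₁.eval (x (r + m)) = v (r + m) := by
        apply h1; rw [Finset.mem_Icc]; omega
      have h0m : F₀.eval (x (r + m)) = v (r + m) := by
        apply h0; rw [Finset.mem_Icc]; omega
      have hPm : P.eval (x (r + m)) = 0 := by
        rw [hP, Polynomial.eval_prod]
        apply Finset.prod_eq_zero (Finset.mem_Icc.mpr hm)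
        simp
      simp only [Polynomial.eval_sub, Polynomial.eval_mul, Polynomial.eval_C,
        h1m, h0m, hPm]
      ring
  have hk : k ∈ Finset.Icc 1 p := Finset.mem_Icc.mpr ⟨hk1, hkp⟩
  have hPsplit : P = (X - C (x (r + k))) *
      ∏ m ∈ (Finset.Icc 1 p).erase k, (X - C (x (r + m))) :=
    (Finset.mul_prod_erase _ _ hk).symm
  have hderiv : (Polynomial.derivative (F₁ - F₀)).eval (x (r + k)) =
      c * ∏ m ∈ (Finset.Icc 1 p).erase k, (x (r + k) - x (r + m)) := by
    rw [hD, Polynomial.derivative_C_mul, hPsplit, Polynomial.derivative_mul]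
    simp only [Polynomial.derivative_sub, Polynomial.derivative_X, Polynomial.derivative_C,
      sub_zero, one_mul, Polynomial.eval_mul, Polynomial.eval_add, Polynomial.eval_C,
      Polynomial.eval_sub, Polynomial.eval_X, sub_self, zero_mul, add_zero,
      Polynomial.eval_prod]
  rw [Polynomial.derivative_sub] at hderiv
  simp only [Polynomial.eval_sub] at hderiv
  rw [hderiv]
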